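/- Let C₁, C₂, C₃ be chain complexes over F₂ equipped with chain maps ιᵢ, Φᵢ, Ψᵢ satisfying Φᵢ² ≃ 0, Ψᵢ² ≃ 0 and ΦᵢΨᵢ ≃ ΨᵢΦᵢ. Define the product involution on a tensor product by ι ×₁ ι' = ι⊗ι' + Φι⊗Ψι' (with Φ,Ψ the relevant maps on each factor, and formal derivative maps on a tensor product given by Φ⊗id + id⊗Φ etc.). Then the two triple products satisfy ((ι₁×₁ι₂)×₁ι₃) + (ι₁×₁(ι₂×₁ι₃)) = Φ₁ι₁⊗Φ₂Ψ₂ι₂⊗Ψ₃ι₃ + Φ₁²ι₁⊗Ψ₂ι₂⊗Ψ₃ι₃ + Φ₁ι₁⊗Ψ₂Φ₂ι₂⊗Ψ₃ι₃ + Φ₁ι₁⊗Φ₂ι₂⊗Ψ₃²ι₃, and this difference is chain homotopic to zero. Hence the product ×₁ is associative up to chain homotopy. -/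
import Mathlib


open TensorProduct

noncomputable section

abbrev F2 : Type := ZMod 2

/-- Chain homotopy (over `F₂`) for maps between two chain complexes:
`f ≃ g` iff `f + g = d₂ ∘ H + H ∘ d₁` for some `F₂`-linear `H`. -/
def Htp2 {C C' : Type} [AddCommGroup C] [Module F2 C]
    [AddCommGroup C'] [Module F2 C']
    (d : C →ₗ[F2] C) (d' : C' →ₗ[F2] C') (f g : C →ₗ[F2] C') : Prop :=
  ∃ H : C →ₗ[F2] C', f + g = d' ∘ₗ H + H ∘ₗ d

/-- Chain homotopy of endomorphisms of a single complex. -/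
def Htp {C : Type} [AddCommGroup C] [Module F2 C]
    (d f g : C →ₗ[F2] C) : Prop :=
  Htp2 d d f g

/-- `f ⊗ id + id ⊗ g` on the tensor product of two complexes over `F₂`; applied
to the differentials it is the tensor-product differential. -/
def tD {C₁ C₂ : Type} [AddCommGroup C₁] [Module F2 C₁]
    [AddCommGroup C₂] [Module F2 C₂]
    (f : C₁ →ₗ[F2] C₁) (g : C₂ →ₗ[F2] C₂) :
    C₁ ⊗[F2] C₂ →ₗ[F2] C₁ ⊗[F2] C₂ :=
  TensorProduct.map f LinearMap.id + TensorProduct.map LinearMap.id g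
/-- The product involution `ι ×₁ ι' = ι⊗ι' + (Φι)⊗(Ψ'ι')` on a tensor product,
where `Φ` is the relevant map on the first factor and `Ψ'` on the second. -/
def pp {A B : Type} [AddCommGroup A] [Module F2 A] [AddCommGroup B] [Module F2 B]
    (ι Φ : A →ₗ[F2] A) (ι' Ψ' : B →ₗ[F2] B) : A ⊗[F2] B →ₗ[F2] A ⊗[F2] B :=
  TensorProduct.map ι ι' + TensorProduct.map (Φ ∘ₗ ι) (Ψ' ∘ₗ ι')

lemma addself {M : Type*} [AddCommGroup M] [Module F2 M] (x : M) : x + x = 0 := by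
  have h2 : (2 : F2) = 0 := by decide
  have : (2 : F2) • x = 0 := by rw [h2, zero_smul]
  simpa [two_smul] using this

lemma zsmul2 {M : Type*} [AddCommGroup M] [Module F2 M] (x : M) : (2:ℤ) • x = 0 := by
  simpa [two_zsmul] using addself x

/-- composing a null-homotopic endomorphism with a chain map on the right -/
lemma htp_comp_right {C : Type} [AddCommGroup C] [Module F2 C]
    (d f c : C →ₗ[F2] C) (hf : Htp d f 0) (hc : d ∘ₗ c = c ∘ₗ d) :
    Htp d (f ∘ₗ c) 0 := by
  obtain ⟨H, hH⟩ := hf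
  refine ⟨H ∘ₗ c, ?_⟩
  rw [add_zero] at hH ⊢
  rw [hH]
  simp only [LinearMap.add_comp, LinearMap.comp_assoc, hc]

/-- chain maps tensor to chain maps -/
lemma tD_comm {C₁ C₂ : Type} [AddCommGroup C₁] [Module F2 C₁]
    [AddCommGroup C₂] [Module F2 C₂]
    (d₁ f : C₁ →ₗ[F2] C₁) (d₂ g : C₂ →ₗ[F2] C₂)
    (hf : d₁ ∘ₗ f = f ∘ₗ d₁) (hg : d₂ ∘ₗ g = g ∘ₗ d₂) :
    tD d₁ d₂ ∘ₗ TensorProduct.map f g = TensorProduct.map f g ∘ₗ tD d₁ d₂ := by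
  simp only [tD, LinearMap.add_comp, LinearMap.comp_add, ← TensorProduct.map_comp,
    hf, hg, LinearMap.id_comp, LinearMap.comp_id]

/-- tensoring a null-homotopic map (left factor) with a chain map -/
lemma htp_map_left {C₁ C₂ : Type} [AddCommGroup C₁] [Module F2 C₁]
    [AddCommGroup C₂] [Module F2 C₂]
    (d₁ f : C₁ →ₗ[F2] C₁) (d₂ g : C₂ →ₗ[F2] C₂)
    (hf : Htp d₁ f 0) (hg : d₂ ∘ₗ g = g ∘ₗ d₂) :
    Htp (tD d₁ d₂) (TensorProduct.map f g) 0 := by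
  obtain ⟨H, hH⟩ := hf
  rw [add_zero] at hH
  refine ⟨TensorProduct.map H g, ?_⟩
  rw [add_zero, hH]
  simp only [tD, LinearMap.add_comp, LinearMap.comp_add, ← TensorProduct.map_comp,
    LinearMap.id_comp, LinearMap.comp_id, TensorProduct.map_add_left]
  rw [hg, add_add_add_comm, addself, add_zero]

/-- tensoring a chain map with a null-homotopic map (right factor) -/
lemma htp_map_right {C₁ C₂ : Type} [AddCommGroup C₁] [Module F2 C₁]
    [AddCommGroup C₂] [Module F2 C₂]
    (d₁ f : C₁ →ₗ[F2] C₁) (d₂ g : C₂ →ₗ[F2] C₂)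
    (hf : d₁ ∘ₗ f = f ∘ₗ d₁) (hg : Htp d₂ g 0) :
    Htp (tD d₁ d₂) (TensorProduct.map f g) 0 := by
  obtain ⟨H, hH⟩ := hg
  rw [add_zero] at hH
  refine ⟨TensorProduct.map f H, ?_⟩
  rw [add_zero, hH]
  simp only [tD, LinearMap.add_comp, LinearMap.comp_add, ← TensorProduct.map_comp,
    LinearMap.id_comp, LinearMap.comp_id, TensorProduct.map_add_right]
  rw [hf, add_add_add_comm, addself, zero_add]

/-- sums of null-homotopic maps are null-homotopic -/
lemma htp_add {C : Type} [AddCommGroup C] [Module F2 C]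
    (d f g : C →ₗ[F2] C) (hf : Htp d f 0) (hg : Htp d g 0) :
    Htp d (f + g) 0 := by
  obtain ⟨H, hH⟩ := hf; obtain ⟨H', hH'⟩ := hg
  rw [add_zero] at hH hH'
  exact ⟨H + H', by
    rw [add_zero, hH, hH']
    simp only [LinearMap.comp_add, LinearMap.add_comp]
    abel⟩

/-- composition of chain maps is a chain map -/
lemma comm_comp {C : Type} [AddCommGroup C] [Module F2 C]
    (d f g : C →ₗ[F2] C) (hf : d ∘ₗ f = f ∘ₗ d) (hg : d ∘ₗ g = g ∘ₗ d) :
    d ∘ₗ (f ∘ₗ g) = (f ∘ₗ g) ∘ₗ d := by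
  rw [← LinearMap.comp_assoc, hf, LinearMap.comp_assoc, hg, LinearMap.comp_assoc]

/-- associativity of the product `×₁` up to chain homotopy.
Transporting `(ι₁×₁ι₂)×₁ι₃` through the associator, the difference with
`ι₁×₁(ι₂×₁ι₃)` equals the four-term error sum, which is chain homotopic to
zero; hence the two triple products are chain homotopic. -/
theorem stmt10 {C₁ C₂ C₃ : Type} [AddCommGroup C₁] [Module F2 C₁]
    [AddCommGroup C₂] [Module F2 C₂] [AddCommGroup C₃] [Module F2 C₃]
    (d₁ ι₁ Φ₁ Ψ₁ : C₁ →ₗ[F2] C₁) (d₂ ι₂ Φ₂ Ψ₂ : C₂ →ₗ[F2] C₂)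
    (d₃ ι₃ Φ₃ Ψ₃ : C₃ →ₗ[F2] C₃)
    (hd₁ : d₁ ∘ₗ d₁ = 0) (hd₂ : d₂ ∘ₗ d₂ = 0) (hd₃ : d₃ ∘ₗ d₃ = 0)
    (hι₁ : d₁ ∘ₗ ι₁ = ι₁ ∘ₗ d₁) (hΦ₁ : d₁ ∘ₗ Φ₁ = Φ₁ ∘ₗ d₁) (hΨ₁ : d₁ ∘ₗ Ψ₁ = Ψ₁ ∘ₗ d₁)
    (hι₂ : d₂ ∘ₗ ι₂ = ι₂ ∘ₗ d₂) (hΦ₂ : d₂ ∘ₗ Φ₂ = Φ₂ ∘ₗ d₂) (hΨ₂ : d₂ ∘ₗ Ψ₂ = Ψ₂ ∘ₗ d₂)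
    (hι₃ : d₃ ∘ₗ ι₃ = ι₃ ∘ₗ d₃) (hΦ₃ : d₃ ∘ₗ Φ₃ = Φ₃ ∘ₗ d₃) (hΨ₃ : d₃ ∘ₗ Ψ₃ = Ψ₃ ∘ₗ d₃)
    (hΦ₁2 : Htp d₁ (Φ₁ ∘ₗ Φ₁) 0) (hΨ₁2 : Htp d₁ (Ψ₁ ∘ₗ Ψ₁) 0)
    (hΦ₂2 : Htp d₂ (Φ₂ ∘ₗ Φ₂) 0) (hΨ₂2 : Htp d₂ (Ψ₂ ∘ₗ Ψ₂) 0)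
    (hΦ₃2 : Htp d₃ (Φ₃ ∘ₗ Φ₃) 0) (hΨ₃2 : Htp d₃ (Ψ₃ ∘ₗ Ψ₃) 0)
    (hc₁ : Htp d₁ (Φ₁ ∘ₗ Ψ₁) (Ψ₁ ∘ₗ Φ₁)) (hc₂ : Htp d₂ (Φ₂ ∘ₗ Ψ₂) (Ψ₂ ∘ₗ Φ₂))
    (hc₃ : Htp d₃ (Φ₃ ∘ₗ Ψ₃) (Ψ₃ ∘ₗ Φ₃)) :
    (TensorProduct.assoc F2 C₁ C₂ C₃).toLinearMap ∘ₗ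
        pp (pp ι₁ Φ₁ ι₂ Ψ₂) (tD Φ₁ Φ₂) ι₃ Ψ₃ ∘ₗ
        (TensorProduct.assoc F2 C₁ C₂ C₃).symm.toLinearMap
      + pp ι₁ Φ₁ (pp ι₂ Φ₂ ι₃ Ψ₃) (tD Ψ₂ Ψ₃)
      = TensorProduct.map (Φ₁ ∘ₗ ι₁)
            (TensorProduct.map (Φ₂ ∘ₗ Ψ₂ ∘ₗ ι₂) (Ψ₃ ∘ₗ ι₃))
        + TensorProduct.map (Φ₁ ∘ₗ Φ₁ ∘ₗ ι₁)
            (TensorProduct.map (Ψ₂ ∘ₗ ι₂) (Ψ₃ ∘ₗ ι₃))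
        + TensorProduct.map (Φ₁ ∘ₗ ι₁)
            (TensorProduct.map (Ψ₂ ∘ₗ Φ₂ ∘ₗ ι₂) (Ψ₃ ∘ₗ ι₃))
        + TensorProduct.map (Φ₁ ∘ₗ ι₁)
            (TensorProduct.map (Φ₂ ∘ₗ ι₂) (Ψ₃ ∘ₗ Ψ₃ ∘ₗ ι₃)) ∧
    Htp (tD d₁ (tD d₂ d₃))
      ((TensorProduct.assoc F2 C₁ C₂ C₃).toLinearMap ∘ₗ
        pp (pp ι₁ Φ₁ ι₂ Ψ₂) (tD Φ₁ Φ₂) ι₃ Ψ₃ ∘ₗ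
        (TensorProduct.assoc F2 C₁ C₂ C₃).symm.toLinearMap)
      (pp ι₁ Φ₁ (pp ι₂ Φ₂ ι₃ Ψ₃) (tD Ψ₂ Ψ₃)) := by
  -- Part 1: the formal identity
  have heq : (TensorProduct.assoc F2 C₁ C₂ C₃).toLinearMap ∘ₗ
        pp (pp ι₁ Φ₁ ι₂ Ψ₂) (tD Φ₁ Φ₂) ι₃ Ψ₃ ∘ₗ
        (TensorProduct.assoc F2 C₁ C₂ C₃).symm.toLinearMap
      + pp ι₁ Φ₁ (pp ι₂ Φ₂ ι₃ Ψ₃) (tD Ψ₂ Ψ₃)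
      = TensorProduct.map (Φ₁ ∘ₗ ι₁)
            (TensorProduct.map (Φ₂ ∘ₗ Ψ₂ ∘ₗ ι₂) (Ψ₃ ∘ₗ ι₃))
        + TensorProduct.map (Φ₁ ∘ₗ Φ₁ ∘ₗ ι₁)
            (TensorProduct.map (Ψ₂ ∘ₗ ι₂) (Ψ₃ ∘ₗ ι₃))
        + TensorProduct.map (Φ₁ ∘ₗ ι₁)
            (TensorProduct.map (Ψ₂ ∘ₗ Φ₂ ∘ₗ ι₂) (Ψ₃ ∘ₗ ι₃))
        + TensorProduct.map (Φ₁ ∘ₗ ι₁)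
            (TensorProduct.map (Φ₂ ∘ₗ ι₂) (Ψ₃ ∘ₗ Ψ₃ ∘ₗ ι₃)) := by
    ext x y z
    simp [pp, tD, TensorProduct.tmul_add, TensorProduct.add_tmul]
    abel_nf
    simp [zsmul2]
  refine ⟨heq, ?_⟩
  -- Part 2: the error terms are null-homotopic
  set D := tD d₁ (tD d₂ d₃) with hD
  set E₁ := TensorProduct.map (Φ₁ ∘ₗ ι₁)
      (TensorProduct.map (Φ₂ ∘ₗ Ψ₂ ∘ₗ ι₂) (Ψ₃ ∘ₗ ι₃)) with hE₁
  set E₂ := TensorProduct.map (Φ₁ ∘ₗ Φ₁ ∘ₗ ι₁)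
      (TensorProduct.map (Ψ₂ ∘ₗ ι₂) (Ψ₃ ∘ₗ ι₃)) with hE₂
  set E₃ := TensorProduct.map (Φ₁ ∘ₗ ι₁)
      (TensorProduct.map (Ψ₂ ∘ₗ Φ₂ ∘ₗ ι₂) (Ψ₃ ∘ₗ ι₃)) with hE₃
  set E₄ := TensorProduct.map (Φ₁ ∘ₗ ι₁)
      (TensorProduct.map (Φ₂ ∘ₗ ι₂) (Ψ₃ ∘ₗ Ψ₃ ∘ₗ ι₃)) with hE₄
  -- chain-map facts
  have cΦ₁ι₁ : d₁ ∘ₗ (Φ₁ ∘ₗ ι₁) = (Φ₁ ∘ₗ ι₁) ∘ₗ d₁ := comm_comp _ _ _ hΦ₁ hι₁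
  have cΦ₂ι₂ : d₂ ∘ₗ (Φ₂ ∘ₗ ι₂) = (Φ₂ ∘ₗ ι₂) ∘ₗ d₂ := comm_comp _ _ _ hΦ₂ hι₂
  have cΨ₂ι₂ : d₂ ∘ₗ (Ψ₂ ∘ₗ ι₂) = (Ψ₂ ∘ₗ ι₂) ∘ₗ d₂ := comm_comp _ _ _ hΨ₂ hι₂
  have cΨ₃ι₃ : d₃ ∘ₗ (Ψ₃ ∘ₗ ι₃) = (Ψ₃ ∘ₗ ι₃) ∘ₗ d₃ := comm_comp _ _ _ hΨ₃ hι₃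
  -- E₂ is null-homotopic: Φ₁² ≃ 0
  have hsqΦ₁ι₁ : Htp d₁ (Φ₁ ∘ₗ Φ₁ ∘ₗ ι₁) 0 := by
    have := htp_comp_right d₁ (Φ₁ ∘ₗ Φ₁) ι₁ hΦ₁2 hι₁
    rwa [LinearMap.comp_assoc] at this
  have h2 : Htp D E₂ 0 :=
    htp_map_left d₁ _ (tD d₂ d₃) _ hsqΦ₁ι₁ (tD_comm d₂ _ d₃ _ cΨ₂ι₂ cΨ₃ι₃)
  -- E₄ is null-homotopic: Ψ₃² ≃ 0
  have hsqΨ₃ι₃ : Htp d₃ (Ψ₃ ∘ₗ Ψ₃ ∘ₗ ι₃) 0 := by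
    have := htp_comp_right d₃ (Ψ₃ ∘ₗ Ψ₃) ι₃ hΨ₃2 hι₃
    rwa [LinearMap.comp_assoc] at this
  have h4 : Htp D E₄ 0 :=
    htp_map_right d₁ _ (tD d₂ d₃) _ cΦ₁ι₁
      (htp_map_right d₂ _ d₃ _ cΦ₂ι₂ hsqΨ₃ι₃)
  -- E₁ + E₃ is null-homotopic: Φ₂Ψ₂ ≃ Ψ₂Φ₂
  have hcross : Htp d₂ (Φ₂ ∘ₗ Ψ₂ + Ψ₂ ∘ₗ Φ₂) 0 := by
    obtain ⟨H, hH⟩ := hc₂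
    exact ⟨H, by rw [add_zero]; exact hH⟩
  have hcrossι : Htp d₂ ((Φ₂ ∘ₗ Ψ₂ + Ψ₂ ∘ₗ Φ₂) ∘ₗ ι₂) 0 :=
    htp_comp_right d₂ _ ι₂ hcross hι₂
  have h13' : Htp D (TensorProduct.map (Φ₁ ∘ₗ ι₁)
      (TensorProduct.map ((Φ₂ ∘ₗ Ψ₂ + Ψ₂ ∘ₗ Φ₂) ∘ₗ ι₂) (Ψ₃ ∘ₗ ι₃))) 0 :=
    htp_map_right d₁ _ (tD d₂ d₃) _ cΦ₁ι₁
      (htp_map_left d₂ _ d₃ _ hcrossι cΨ₃ι₃)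
  have hsplit : TensorProduct.map (Φ₁ ∘ₗ ι₁)
      (TensorProduct.map ((Φ₂ ∘ₗ Ψ₂ + Ψ₂ ∘ₗ Φ₂) ∘ₗ ι₂) (Ψ₃ ∘ₗ ι₃)) = E₁ + E₃ := by
    rw [hE₁, hE₃]
    rw [LinearMap.add_comp, TensorProduct.map_add_left, TensorProduct.map_add_right,
      LinearMap.comp_assoc, LinearMap.comp_assoc]
  rw [hsplit] at h13'
  -- combine
  have hall : Htp D (E₁ + E₃ + E₂ + E₄) 0 :=
    htp_add D _ _ (htp_add D _ _ h13' h2) h4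
  obtain ⟨H, hH⟩ := hall
  rw [add_zero] at hH
  refine ⟨H, ?_⟩
  rw [heq, ← hH, add_right_comm E₁ E₂ E₃]

end
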